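/- Let x be a bounded operator and let {φn : n ∈ I1} be a total (complete) orthonormal family in H of eigenvectors of N1 = x x†. Suppose N2 = x† x is injective. Then the family {x† φn : n ∈ I2}, where I2 = {n ∈ I1 : x† φn ≠ 0}, is total in H. -/

import Mathlib

open ContinuousLinearMap

theorem adjoint_family_total_of_N2_injective
    {H : Type*} [NormedAddCommGroup H] [InnerProductSpace ℂ H] [CompleteSpace H]
    {ι : Type*} (x : H →L[ℂ] H) (φ : ι → H) (ν : ι → ℂ)
    (horth : Orthonormal ℂ φ)
    (htotal : (Submodule.span ℂ (Set.range φ)).topologicalClosure = ⊤)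
    (hν : ∀ n, (x ∘L ContinuousLinearMap.adjoint x) (φ n) = ν n • φ n)
    (hinj : Function.Injective ⇑(ContinuousLinearMap.adjoint x ∘L x)) :
    (Submodule.span ℂ
        ((fun n => ContinuousLinearMap.adjoint x (φ n)) ''
          {n | ContinuousLinearMap.adjoint x (φ n) ≠ 0})).topologicalClosure = ⊤ := by
  rw [Submodule.topologicalClosure_eq_top_iff] at htotal ⊢
  rw [Submodule.eq_bot_iff]
  intro v hv
  -- every ⟪x† φ n, v⟫ = 0
  have key : ∀ n, inner ℂ (ContinuousLinearMap.adjoint x (φ n)) v = (0 : ℂ) := by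
    intro n
    by_cases h : ContinuousLinearMap.adjoint x (φ n) = 0
    · simp [h]
    · exact hv _ (Submodule.subset_span ⟨n, h, rfl⟩)
  have hxv : x v ∈ (Submodule.span ℂ (Set.range φ))ᗮ := by
    rw [Submodule.mem_orthogonal]
    intro u hu
    refine Submodule.span_induction ?_ (by simp) ?_ ?_ hu
    · rintro u ⟨n, rfl⟩
      have := key n
      rwa [ContinuousLinearMap.adjoint_inner_left] at this
    · intro a b _ _ ha hb; rw [inner_add_left, ha, hb, add_zero]
    · intro c a _ ha; rw [inner_smul_left, ha, mul_zero]
  rw [htotal, Submodule.mem_bot] at hxv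
  have : (ContinuousLinearMap.adjoint x ∘L x) v = (ContinuousLinearMap.adjoint x ∘L x) 0 := by
    simp [hxv]
  exact hinj this
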